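/- Let (V, ≤, ℓ) be a finite {a, b}-labeled DAG and let i ∈ ℕ. If V contains an antichain of cardinality 2i, then V has a topological sort whose achieved word contains a^i or b^i as a factor. -/
import Mathlib


namespace CTS

/-- The two-letter alphabet `{a, b}`. -/
inductive AB : Type
  | a : AB
  | b : AB
deriving DecidableEq

/-- A topological sort of the finite partial order `V`: a duplicate-free list containing
every element, such that whenever `u < v`, `u` occurs before `v`. -/
def IsTopSort {V : Type*} [PartialOrder V] (σ : List V) : Prop :=
  σ.Nodup ∧ (∀ v : V, v ∈ σ) ∧ σ.Pairwise (fun u v => ¬ v < u)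

theorem aux {V : Type*} [Fintype V] [PartialOrder V] (ℓ : V → AB) (c : AB) (i : ℕ)
    (A : Finset V) (hcardA : A.card = i)
    (hantiA : IsAntichain (· ≤ ·) (A : Set V))
    (hlab : ∀ v ∈ A, ℓ v = c) :
    ∃ σ : List V, IsTopSort σ ∧ ∃ p s : List AB,
      σ.map ℓ = p ++ List.replicate i c ++ s := by
  classical
  obtain ⟨r, hr, hle⟩ := extend_partialOrder ((· ≤ ·) : V → V → Prop)
  haveI := hr
  haveI : DecidableRel r := Classical.decRel r
  set D : Finset V := Finset.univ.filter (fun v => v ∉ A ∧ ¬ ∃ x ∈ A, x < v) with hD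
  set U : Finset V := Finset.univ.filter (fun v => v ∉ A ∧ ∃ x ∈ A, x < v) with hU
  have hmemD : ∀ v, v ∈ D ↔ v ∉ A ∧ ¬ ∃ x ∈ A, x < v := by
    intro v; simp [hD]
  have hmemU : ∀ v, v ∈ U ↔ v ∉ A ∧ ∃ x ∈ A, x < v := by
    intro v; simp [hU]
  -- the strict-order fact used within sorted blocks
  have block : ∀ (S : Finset V), (S.sort r).Pairwise (fun u v => ¬ v < u) := by
    intro S
    have hs := S.pairwise_sort r
    have hn := S.sort_nodup r
    refine List.Pairwise.imp_of_mem ?_ (hs.and hn)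
    rintro u v _ _ ⟨hruv, hne⟩ hlt
    have : r v u := hle _ _ hlt.le
    exact hne (antisymm hruv this)
  refine ⟨D.sort r ++ (A.sort r ++ U.sort r), ⟨?_, ?_, ?_⟩,
    (D.sort r).map ℓ, (U.sort r).map ℓ, ?_⟩
  · -- Nodup
    refine List.Nodup.append (D.sort_nodup r) ?_ ?_
    · refine List.Nodup.append (A.sort_nodup r) (U.sort_nodup r) ?_
      intro x hxA hxU
      rw [Finset.mem_sort] at hxA hxU
      exact ((hmemU x).1 hxU).1 hxA
    · intro x hxD hx
      rw [Finset.mem_sort] at hxD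
      rcases List.mem_append.1 hx with hxA | hxU
      · rw [Finset.mem_sort] at hxA
        exact ((hmemD x).1 hxD).1 hxA
      · rw [Finset.mem_sort] at hxU
        exact ((hmemD x).1 hxD).2 ((hmemU x).1 hxU).2
  · -- membership
    intro v
    simp only [List.mem_append, Finset.mem_sort, hmemD, hmemU]
    by_cases hvA : v ∈ A
    · tauto
    · by_cases h : ∃ x ∈ A, x < v <;> tauto
  · -- pairwise
    rw [List.pairwise_append]
    refine ⟨block D, ?_, ?_⟩
    · rw [List.pairwise_append]
      refine ⟨block A, block U, ?_⟩
      -- u ∈ A, v ∈ U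
      intro u hu v hv hlt
      rw [Finset.mem_sort] at hu hv
      obtain ⟨x, hxA, hxv⟩ := ((hmemU v).1 hv).2
      have hxu : x < u := hxv.trans hlt
      exact hantiA hxA hu (fun h => absurd (h ▸ hxu) (lt_irrefl u)) hxu.le
    · -- u ∈ D, v ∈ A ∪ U
      intro u hu v hv hlt
      rw [Finset.mem_sort] at hu
      rcases List.mem_append.1 hv with hvA | hvU
      · rw [Finset.mem_sort] at hvA
        exact ((hmemD u).1 hu).2 ⟨v, hvA, hlt⟩
      · rw [Finset.mem_sort] at hvU
        obtain ⟨x, hxA, hxv⟩ := ((hmemU v).1 hvU).2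
        exact ((hmemD u).1 hu).2 ⟨x, hxA, hxv.trans hlt⟩
  · -- the word
    have hA : (A.sort r).map ℓ = List.replicate i c := by
      apply List.eq_replicate_iff.2
      constructor
      · rw [List.length_map, Finset.length_sort, hcardA]
      · intro x hx
        obtain ⟨v, hv, rfl⟩ := List.mem_map.1 hx
        exact hlab v ((Finset.mem_sort r).1 hv)
    simp [hA]

/-- if a finite `{a,b}`-labeled DAG contains an antichain of cardinality
`2i`, then it has a topological sort whose achieved word contains `a^i` or `b^i` as a
factor. -/
theorem stmt10 {V : Type*} [Fintype V] [PartialOrder V] (ℓ : V → AB) (i : ℕ)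
    (C : Finset V) (hcard : C.card = 2 * i)
    (hanti : IsAntichain (· ≤ ·) (C : Set V)) :
    ∃ σ : List V, IsTopSort σ ∧
      ∃ p s : List AB,
        σ.map ℓ = p ++ List.replicate i AB.a ++ s ∨
        σ.map ℓ = p ++ List.replicate i AB.b ++ s := by
  classical
  set Ca := C.filter (fun v => ℓ v = AB.a) with hCa
  set Cb := C.filter (fun v => ℓ v ≠ AB.a) with hCb
  have hsum : Ca.card + Cb.card = 2 * i := by
    rw [hCa, hCb, Finset.card_filter_add_card_filter_not, hcard]
  have key : ∃ (A : Finset V) (c : AB), A ⊆ C ∧ A.card = i ∧ ∀ v ∈ A, ℓ v = c := by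
    by_cases h : i ≤ Ca.card
    · obtain ⟨A, hAs, hAc⟩ := Finset.exists_subset_card_eq h
      refine ⟨A, AB.a, (hAs.trans (Finset.filter_subset _ _)), hAc, ?_⟩
      intro v hv
      exact (Finset.mem_filter.1 (hAs hv)).2
    · have : i ≤ Cb.card := by omega
      obtain ⟨A, hAs, hAc⟩ := Finset.exists_subset_card_eq this
      refine ⟨A, AB.b, (hAs.trans (Finset.filter_subset _ _)), hAc, ?_⟩
      intro v hv
      have := (Finset.mem_filter.1 (hAs hv)).2
      cases hℓ : ℓ v <;> simp_all
  obtain ⟨A, c, hAC, hAc, hlab⟩ := key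
  have hantiA : IsAntichain (· ≤ ·) (A : Set V) :=
    hanti.subset (by exact_mod_cast hAC)
  obtain ⟨σ, hσ, p, s, hw⟩ := aux ℓ c i A hAc hantiA hlab
  refine ⟨σ, hσ, p, s, ?_⟩
  cases c
  · exact Or.inl hw
  · exact Or.inr hw

end CTS
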